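/- Let n ≥ 1, let S_n be the star graph on vertices {0,1,...,n-1}, and let α be a partial weak endomorphism of S_n such that 0 ∈ dom(α) or im(α) = {0} or 0 ∉ im(α). Then there exists a partial automorphism β of S_n with α = αβα. -/

import Mathlib

def pmul {V : Type*} (f g : V → Option V) : V → Option V := fun x => (f x).bind g

def pdom {V : Type*} (f : V → Option V) : Set V := {x | f x ≠ none}

def pim {V : Type*} (f : V → Option V) : Set V := {y | ∃ x, f x = some y}

def pker {V : Type*} (f : V → Option V) : V → V → Prop := fun x y => f x ≠ none ∧ f x = f y

def PInj {V : Type*} (f : V → Option V) : Prop := ∀ u v a, f u = some a → f v = some a → u = v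

def edge {n : ℕ} (u v : Fin n) : Prop := (u.val = 0 ∧ v.val ≠ 0) ∨ (v.val = 0 ∧ u.val ≠ 0)

def IsPEnd {n : ℕ} (α : Fin n → Option (Fin n)) : Prop :=
  ∀ u v a b, α u = some a → α v = some b → edge u v → edge a b

def IsPwEnd {n : ℕ} (α : Fin n → Option (Fin n)) : Prop :=
  ∀ u v a b, α u = some a → α v = some b → edge u v → a ≠ b → edge a b

def IsPsEnd {n : ℕ} (α : Fin n → Option (Fin n)) : Prop :=
  ∀ u v a b, α u = some a → α v = some b → (edge u v ↔ edge a b)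

def IsPswEnd {n : ℕ} (α : Fin n → Option (Fin n)) : Prop :=
  ∀ u v a b, α u = some a → α v = some b → ((edge u v ∧ a ≠ b) ↔ edge a b)

def PEndS (n : ℕ) : Set (Fin n → Option (Fin n)) := {α | IsPEnd α}
def PwEndS (n : ℕ) : Set (Fin n → Option (Fin n)) := {α | IsPwEnd α}
def PsEndS (n : ℕ) : Set (Fin n → Option (Fin n)) := {α | IsPsEnd α}
def PswEndS (n : ℕ) : Set (Fin n → Option (Fin n)) := {α | IsPswEnd α}
def IEndS (n : ℕ) : Set (Fin n → Option (Fin n)) := {α | PInj α ∧ IsPEnd α}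
def PAutS (n : ℕ) : Set (Fin n → Option (Fin n)) := {α | PInj α ∧ IsPsEnd α}

def RegularIn {V : Type*} (M : Set (V → Option V)) (a : V → Option V) : Prop :=
  ∃ b ∈ M, pmul (pmul a b) a = a

def GreenL {V : Type*} (M : Set (V → Option V)) (a b : V → Option V) : Prop :=
  (∃ g ∈ M, a = pmul g b) ∧ (∃ g ∈ M, b = pmul g a)

def GreenR {V : Type*} (M : Set (V → Option V)) (a b : V → Option V) : Prop :=
  (∃ g ∈ M, a = pmul b g) ∧ (∃ g ∈ M, b = pmul a g)

def GreenH {V : Type*} (M : Set (V → Option V)) (a b : V → Option V) : Prop :=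
  GreenL M a b ∧ GreenR M a b

def GreenJ {V : Type*} (M : Set (V → Option V)) (a b : V → Option V) : Prop :=
  (∃ g ∈ M, ∃ h ∈ M, a = pmul (pmul g b) h) ∧ (∃ g ∈ M, ∃ h ∈ M, b = pmul (pmul g a) h)

theorem stmt11 (n : ℕ) (hn : 1 ≤ n) (α : Fin n → Option (Fin n)) (hα : α ∈ PwEndS n)
    (h : (⟨0, hn⟩ : Fin n) ∈ pdom α ∨ pim α = {(⟨0, hn⟩ : Fin n)} ∨ (⟨0, hn⟩ : Fin n) ∉ pim α) :
    ∃ β ∈ PAutS n, pmul (pmul α β) α = α := by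
  classical
  set z : Fin n := ⟨0, hn⟩ with hz
  have hval : ∀ u : Fin n, u.val = 0 ↔ u = z := by
    intro u
    constructor
    · intro h0; exact Fin.ext h0
    · intro h0; rw [h0]
  have hirr : ∀ u : Fin n, ¬ edge u u := by
    intro u hu
    rcases hu with ⟨h1, h2⟩ | ⟨h1, h2⟩ <;> exact h2 h1
  rcases hc : α z with _ | c
  · -- case α z = none
    have hdom : ¬ ((⟨0, hn⟩ : Fin n) ∈ pdom α) := by
      intro hd
      exact hd hc
    have h2 : pim α = {(⟨0, hn⟩ : Fin n)} ∨ (⟨0, hn⟩ : Fin n) ∉ pim α := by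
      rcases h with h | h | h
      · exact absurd h hdom
      · exact Or.inl h
      · exact Or.inr h
    set β : Fin n → Option (Fin n) :=
      fun a => if hex : ∃ x, α x = some a then some hex.choose else none with hβ
    have hspec : ∀ a y, β a = some y → α y = some a := by
      intro a y hy
      by_cases hex : ∃ x, α x = some a
      · rw [hβ] at hy
        simp only [dif_pos hex] at hy
        have hy' := Option.some.inj hy
        subst hy'
        exact hex.choose_spec
      · rw [hβ] at hy
        simp only [dif_neg hex] at hy
        exact nomatch hy
    refine ⟨β, ⟨?_, ?_⟩, ?_⟩
    · -- PInj
      intro u v a h1 h2'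
      have hu := hspec u a h1
      have hv := hspec v a h2'
      rw [hu] at hv
      exact Option.some.inj hv
    · -- IsPsEnd
      intro u v a b h1 h2'
      have hu := hspec u a h1
      have hv := hspec v b h2'
      have ha : a ≠ z := by
        intro rfl'
        rw [rfl', hc] at hu
        exact nomatch hu
      have hb : b ≠ z := by
        intro rfl'
        rw [rfl', hc] at hv
        exact nomatch hv
      have hab : ¬ edge a b := by
        intro he
        rcases he with ⟨e1, _⟩ | ⟨e1, _⟩
        · exact ha ((hval a).mp e1)
        · exact hb ((hval b).mp e1)
      have huv : ¬ edge u v := by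
        rcases h2 with him | hnim
        · have hu' : u = z := by
            have : u ∈ pim α := ⟨a, hu⟩
            rw [him] at this
            exact this
          have hv' : v = z := by
            have : v ∈ pim α := ⟨b, hv⟩
            rw [him] at this
            exact this
          rw [hu', hv']
          exact hirr z
        · intro he
          rcases he with ⟨e1, _⟩ | ⟨e1, _⟩
          · have hu' : u = z := (hval u).mp e1
            rw [hu'] at hu
            exact hnim ⟨a, hu⟩
          · have hv' : v = z := (hval v).mp e1
            rw [hv'] at hv
            exact hnim ⟨b, hv⟩
      exact iff_of_false huv hab
    · -- equation
      funext x
      rcases hx : α x with _ | a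
      · simp [pmul, hx]
      · have hex : ∃ y, α y = some a := ⟨x, hx⟩
        have hba : β a = some hex.choose := by
          rw [hβ]; simp only [dif_pos hex]
        simp [pmul, hx, hba, hex.choose_spec]
  · -- case α z = some c
    set β : Fin n → Option (Fin n) :=
      fun a => if a = c then some z
               else if hex : ∃ x, α x = some a then some hex.choose else none with hβ
    have hβc : β c = some z := by rw [hβ]; simp
    have hspec : ∀ a y, a ≠ c → β a = some y → α y = some a ∧ y ≠ z := by
      intro a y hac hy
      rw [hβ] at hy
      simp only [if_neg hac] at hy
      by_cases hex : ∃ x, α x = some a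
      · simp only [dif_pos hex] at hy
        have hy' := Option.some.inj hy
        have hay : α y = some a := by rw [← hy']; exact hex.choose_spec
        refine ⟨hay, ?_⟩
        intro rfl'
        rw [rfl', hc] at hay
        exact hac (Option.some.inj hay).symm
      · simp only [dif_neg hex] at hy
        exact nomatch hy
    have claim : ∀ u x, α x = some u → x ≠ z → u ≠ c → edge c u := by
      intro u x hx hxz huc
      have hezx : edge z x := Or.inl ⟨rfl, fun h0 => hxz ((hval x).mp h0)⟩
      exact hα z x c u hc hx hezx (fun h0 => huc h0.symm)
    refine ⟨β, ⟨?_, ?_⟩, ?_⟩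
    · -- PInj
      intro u v a h1 h2'
      by_cases hu : u = c <;> by_cases hv : v = c
      · rw [hu, hv]
      · rw [hu, hβc] at h1
        have := (hspec v a hv h2').2
        exact absurd (Option.some.inj h1).symm this
      · rw [hv, hβc] at h2'
        have := (hspec u a hu h1).2
        exact absurd (Option.some.inj h2').symm this
      · have h1' := (hspec u a hu h1).1
        have h2'' := (hspec v a hv h2').1
        rw [h1'] at h2''
        exact Option.some.inj h2''
    · -- IsPsEnd
      intro u v a b h1 h2'
      by_cases hu : u = c <;> by_cases hv : v = c
      · rw [hu, hβc] at h1
        rw [hv, hβc] at h2'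
        have ha : a = z := (Option.some.inj h1).symm
        have hb : b = z := (Option.some.inj h2').symm
        rw [ha, hb, hu, hv]
        exact iff_of_false (hirr c) (hirr z)
      · rw [hu, hβc] at h1
        have ha : a = z := (Option.some.inj h1).symm
        obtain ⟨hbv, hbz⟩ := hspec v b hv h2'
        have hcv : edge c v := claim v b hbv hbz hv
        have hzb : edge a b := by
          rw [ha]
          exact Or.inl ⟨rfl, fun h0 => hbz ((hval b).mp h0)⟩
        rw [hu]
        exact iff_of_true hcv hzb
      · rw [hv, hβc] at h2'
        have hb : b = z := (Option.some.inj h2').symm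
        obtain ⟨hau, haz⟩ := hspec u a hu h1
        have hcu : edge c u := claim u a hau haz hu
        have hcu' : edge u c := hcu.symm.imp (fun ⟨p, q⟩ => ⟨p, q⟩) (fun ⟨p, q⟩ => ⟨p, q⟩)
        have hab : edge a b := by
          rw [hb]
          exact Or.inr ⟨rfl, fun h0 => haz ((hval a).mp h0)⟩
        rw [hv]
        exact iff_of_true hcu' hab
      · obtain ⟨hau, haz⟩ := hspec u a hu h1
        obtain ⟨hbv, hbz⟩ := hspec v b hv h2'
        have hab : ¬ edge a b := by
          intro he
          rcases he with ⟨e1, _⟩ | ⟨e1, _⟩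
          · exact haz ((hval a).mp e1)
          · exact hbz ((hval b).mp e1)
        have huv : ¬ edge u v := by
          intro he
          rcases he with ⟨e1, e2⟩ | ⟨e1, e2⟩
          · -- u = z, v ≠ 0
            have hcv : edge c v := claim v b hbv hbz hv
            rcases hcv with ⟨f1, _⟩ | ⟨f1, _⟩
            · exact hu (((hval u).mp e1).trans ((hval c).mp f1).symm)
            · exact e2 f1
          · have hcu : edge c u := claim u a hau haz hu
            rcases hcu with ⟨f1, _⟩ | ⟨f1, _⟩
            · exact hv (((hval v).mp e1).trans ((hval c).mp f1).symm)
            · exact e2 f1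
        exact iff_of_false huv hab
    · -- equation
      funext x
      rcases hx : α x with _ | a
      · simp [pmul, hx]
      · by_cases hac : a = c
        · subst hac
          simp [pmul, hx, hβc, hc]
        · have hex : ∃ y, α y = some a := ⟨x, hx⟩
          have hba : β a = some hex.choose := by
            rw [hβ]; simp only [if_neg hac, dif_pos hex]
          simp [pmul, hx, hba, hex.choose_spec]
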